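/- There is an absolute constant c > 0 such that for every prime p and every positive divisor m of p−1 with d = (p−1)/m ≥ 3 odd, the multiplicative subgroup G_m of (Z/pZ)^* of order d satisfies θ(m,p) ≥ c·p^{1/φ(d)}, where φ is Euler's totient function. -/

import Mathlib

open scoped Classical

noncomputable section

/-- `ρ(λ,p) = min { r·s : r, s positive integers with r ≡ λ·s (mod p) }`. -/
def rho (p : ℕ) (lam : (ZMod p)ˣ) : ℕ :=
  sInf {n : ℕ | ∃ r s : ℕ, 0 < r ∧ 0 < s ∧ (r : ZMod p) = (lam : ZMod p) * s ∧ n = r * s}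

/-- `θ(m,p) = min_{λ ∈ G_m, λ ≠ 1} ρ(λ,p)`, where `G_m = {λ : λ ^ d = 1}` and `d = (p-1)/m`. -/
def theta (p d : ℕ) : ℕ :=
  sInf {n : ℕ | ∃ lam : (ZMod p)ˣ, lam ^ d = 1 ∧ lam ≠ 1 ∧ n = rho p lam}

open Polynomial Finset

lemma homog (K : Type*) [Field K] (e : ℕ) (r s : ℕ) (hs : (s : K) ≠ 0) :
    ((∑ i ∈ Finset.range (e.totient + 1),
        (cyclotomic e ℤ).coeff i * (r : ℤ) ^ i * (s : ℤ) ^ (e.totient - i) : ℤ) : K)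
      = (s : K) ^ e.totient * (cyclotomic e K).eval ((r : K) / (s : K)) := by
  rw [eval_eq_sum_range]
  rw [natDegree_cyclotomic]
  push_cast
  rw [Finset.mul_sum]
  refine Finset.sum_congr rfl fun i hi => ?_
  rw [Finset.mem_range] at hi
  have hi' : i ≤ e.totient := Nat.lt_succ_iff.mp hi
  have : (cyclotomic e K).coeff i = ((cyclotomic e ℤ).coeff i : K) := by
    rw [← map_cyclotomic_int e K, coeff_map]; simp
  rw [this, div_pow, pow_sub₀ _ hs hi']
  field_simp

lemma key_nat {p : ℕ} (hp : p.Prime) {d : ℕ} (hd3 : 3 ≤ d) (hodd : Odd d) (hdvd : d ∣ p - 1)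
    {lam : (ZMod p)ˣ} (hpow : lam ^ d = 1) (hne : lam ≠ 1)
    {r s : ℕ} (hr : 0 < r) (hs : 0 < s) (hcong : (r : ZMod p) = (lam : ZMod p) * s) :
    p ≤ (r * s + 1) ^ d.totient := by
  haveI : Fact p.Prime := ⟨hp⟩
  have hp1 : 0 < p - 1 := by
    have := hp.two_le; omega
  have hdp : d ≤ p - 1 := Nat.le_of_dvd hp1 hdvd
  have hφd : 0 < d.totient := Nat.totient_pos.mpr (by omega)
  -- trivial case : p ∣ s
  by_cases hps : (s : ZMod p) = 0
  · rw [ZMod.natCast_eq_zero_iff] at hps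
    have : p ≤ s := Nat.le_of_dvd hs hps
    calc p ≤ r * s + 1 := by nlinarith
    _ ≤ (r * s + 1) ^ d.totient := Nat.le_self_pow (by omega) _
  · -- main case
    set e := orderOf lam with he_def
    have he_dvd : e ∣ d := orderOf_dvd_of_pow_eq_one hpow
    have he1 : e ≠ 1 := fun h => hne (orderOf_eq_one_iff.mp h)
    have he0 : e ≠ 0 := by
      intro h
      exact (by omega : d ≠ 0) (Nat.eq_zero_of_zero_dvd (h ▸ he_dvd))
    have heodd : Odd e := hodd.of_dvd_nat he_dvd
    have he2 : e ≠ 2 := by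
      intro h
      rw [h] at heodd
      exact (by decide : ¬ Odd 2) heodd
    have he3 : 3 ≤ e := by omega
    have heltp : e < p := lt_of_le_of_lt (le_trans (Nat.le_of_dvd (by omega) he_dvd) hdp) (by omega)
    have hene : (e : ZMod p) ≠ 0 := by
      rw [Ne, ZMod.natCast_eq_zero_iff]
      intro h
      have h1 : p ≤ e := Nat.le_of_dvd (Nat.pos_of_ne_zero he0) h
      omega
    haveI : NeZero ((e : ZMod p)) := ⟨hene⟩
    have hprim : IsPrimitiveRoot ((lam : ZMod p)) e :=
      IsPrimitiveRoot.coe_units_iff.mpr (IsPrimitiveRoot.orderOf lam)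
    have hD2 : 2 ≤ e.totient := by
      have h0 : 0 < e.totient := Nat.totient_pos.mpr (Nat.pos_of_ne_zero he0)
      have h1 : e.totient ≠ 1 := by
        intro h
        rcases Nat.totient_eq_one_iff.mp h with h' | h' <;> omega
      omega
    set N : ℤ := ∑ i ∈ Finset.range (e.totient + 1),
        (cyclotomic e ℤ).coeff i * (r : ℤ) ^ i * (s : ℤ) ^ (e.totient - i) with hN_def
    -- Step A : p ∣ N
    have hstepA : (p : ℤ) ∣ N := by
      rw [← ZMod.intCast_zmod_eq_zero_iff_dvd]
      have := homog (ZMod p) e r s hps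
      rw [hN_def]
      push_cast at this ⊢
      rw [this]
      have hdiv : (r : ZMod p) / (s : ZMod p) = (lam : ZMod p) := by
        rw [div_eq_iff hps, hcong]
      rw [hdiv]
      have : (cyclotomic e (ZMod p)).IsRoot (lam : ZMod p) :=
        (isRoot_cyclotomic_iff).mpr hprim
      rw [IsRoot.def] at this
      rw [this, mul_zero]
    -- Step B : N ≠ 0
    have hsq : (s : ℚ) ≠ 0 := Nat.cast_ne_zero.mpr hs.ne'
    have hstepB : N ≠ 0 := by
      intro h
      have := homog ℚ e r s hsq
      rw [hN_def] at h
      rw [h] at this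
      simp only [Int.cast_zero] at this
      have heval : (cyclotomic e ℚ).eval ((r : ℚ) / s) = 0 := by
        rcases mul_eq_zero.mp this.symm with h' | h'
        · exact absurd h' (pow_ne_zero _ hsq)
        · exact h'
      have hirr : Irreducible (cyclotomic e ℚ) := cyclotomic.irreducible_rat (by omega)
      have hdeg := Polynomial.degree_eq_one_of_irreducible_of_root hirr heval
      rw [degree_cyclotomic] at hdeg
      have : e.totient = 1 := by exact_mod_cast hdeg
      omega
    -- Step C : |N| ≤ (r+s)^D  (over ℂ)
    have hsc : (s : ℂ) ≠ 0 := Nat.cast_ne_zero.mpr hs.ne'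
    have hstepC : |N| ≤ ((r + s : ℕ) : ℤ) ^ e.totient := by
      have hhom := homog ℂ e r s hsc
      obtain ⟨ζ, hζ⟩ : ∃ ζ : ℂ, IsPrimitiveRoot ζ e := ⟨_, Complex.isPrimitiveRoot_exp e he0⟩
      have hcyc := cyclotomic_eq_prod_X_sub_primitiveRoots hζ
      have hcard : (primitiveRoots e ℂ).card = e.totient := hζ.card_primitiveRoots
      have hnorm : ‖(N : ℂ)‖ ≤ ((r : ℝ) + s) ^ e.totient := by
        rw [hN_def, hhom, hcyc, eval_prod]
        simp only [eval_sub, eval_X, eval_C]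
        rw [norm_mul, norm_pow, norm_prod]
        have hbound : ∀ μ ∈ primitiveRoots e ℂ, ‖(r : ℂ) / s - μ‖ ≤ (r : ℝ) / s + 1 := by
          intro μ hμ
          have hμp : IsPrimitiveRoot μ e := (mem_primitiveRoots (by omega)).mp hμ
          have : ‖μ‖ = 1 := Complex.norm_eq_one_of_pow_eq_one hμp.pow_eq_one he0
          calc ‖(r : ℂ) / s - μ‖ ≤ ‖(r : ℂ) / s‖ + ‖μ‖ := norm_sub_le _ _
          _ = (r : ℝ) / s + 1 := by
              rw [this, norm_div]
              simp [Complex.norm_natCast]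
        calc ‖(s : ℂ)‖ ^ e.totient * ∏ μ ∈ primitiveRoots e ℂ, ‖(r : ℂ) / s - μ‖
            ≤ ‖(s : ℂ)‖ ^ e.totient * ∏ μ ∈ primitiveRoots e ℂ, ((r : ℝ) / s + 1) := by
              apply mul_le_mul_of_nonneg_left
              · exact Finset.prod_le_prod (fun μ _ => norm_nonneg _) hbound
              · positivity
        _ = (s : ℝ) ^ e.totient * ((r : ℝ) / s + 1) ^ e.totient := by
              rw [Finset.prod_const, hcard]
              simp [Complex.norm_natCast]
        _ = ((r : ℝ) + s) ^ e.totient := by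
              rw [← mul_pow]
              congr 1
              have : (s : ℝ) ≠ 0 := Nat.cast_ne_zero.mpr hs.ne'
              field_simp
      have hNC : (N : ℂ) = ((N : ℝ) : ℂ) := by push_cast; ring
      rw [hNC, Complex.norm_real, Real.norm_eq_abs] at hnorm
      have : (|N| : ℝ) ≤ (((r + s : ℕ) : ℤ) : ℝ) ^ e.totient := by
        push_cast at hnorm ⊢
        exact hnorm
      exact_mod_cast this
    -- combine: p ≤ (r+s)^D
    have hple : (p : ℤ) ≤ |N| := Int.le_of_dvd (abs_pos.mpr hstepB) ((dvd_abs _ _).mpr hstepA)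
    have hcomb : p ≤ (r + s) ^ e.totient := by
      have := le_trans hple hstepC
      exact_mod_cast this
    -- r + s ≤ r*s + 1
    have hrs1 : r + s ≤ r * s + 1 := by nlinarith
    have hDd : e.totient ≤ d.totient := Nat.le_of_dvd hφd (Nat.totient_dvd_of_dvd he_dvd)
    calc p ≤ (r + s) ^ e.totient := hcomb
    _ ≤ (r * s + 1) ^ e.totient := Nat.pow_le_pow_left hrs1 _
    _ ≤ (r * s + 1) ^ d.totient := Nat.pow_le_pow_right (by omega) hDd

/-- Lemma (lower bound for `θ(m,p)`): there is an absolute constant `c > 0` such that for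
every prime `p` and positive divisor `m` of `p-1` with `d = (p-1)/m ≥ 3` odd, one has
`θ(m,p) ≥ c · p^{1/φ(d)}`. -/
theorem theta_lower_bound :
    ∃ c : ℝ, 0 < c ∧ ∀ p : ℕ, p.Prime →
      ∀ m : ℕ, 0 < m → m ∣ p - 1 → Odd ((p - 1) / m) → 3 ≤ (p - 1) / m →
        c * (p : ℝ) ^ ((Nat.totient ((p - 1) / m) : ℝ))⁻¹ ≤ (theta p ((p - 1) / m) : ℝ) := by
  refine ⟨1 / 2, by norm_num, fun p hp m hm hmdvd hodd hd3 => ?_⟩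
  haveI : Fact p.Prime := ⟨hp⟩
  set d := (p - 1) / m with hd_def
  have hdvd : d ∣ p - 1 := Nat.div_dvd_of_dvd hmdvd
  have hp1 : 0 < p - 1 := by have := hp.two_le; omega
  -- existence of lam of order d
  obtain ⟨g, hg⟩ := IsCyclic.exists_ofOrder_eq_natCard (α := (ZMod p)ˣ)
  have hgord : orderOf g = p - 1 := by
    rw [hg, Nat.card_eq_fintype_card, ZMod.card_units_eq_totient, Nat.totient_prime hp]
  have horder : orderOf (g ^ m) = d := by
    rw [orderOf_pow, hgord, Nat.gcd_eq_right hmdvd]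
  have hpow : (g ^ m) ^ d = 1 := by rw [← horder]; exact pow_orderOf_eq_one _
  have hne : (g ^ m) ≠ 1 := by
    intro h
    rw [h, orderOf_one] at horder
    omega
  -- theta is attained
  have hθmem : theta p d ∈
      {n : ℕ | ∃ lam : (ZMod p)ˣ, lam ^ d = 1 ∧ lam ≠ 1 ∧ n = rho p lam} :=
    Nat.sInf_mem ⟨rho p (g ^ m), g ^ m, hpow, hne, rfl⟩
  obtain ⟨lam, hlpow, hlne, hleq⟩ := hθmem
  -- rho is attained
  have hρne : {n : ℕ | ∃ r s : ℕ, 0 < r ∧ 0 < s ∧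
      (r : ZMod p) = (lam : ZMod p) * s ∧ n = r * s}.Nonempty := by
    refine ⟨((lam : ZMod p)).val * 1, ((lam : ZMod p)).val, 1, ?_, one_pos, ?_, rfl⟩
    · rw [Nat.pos_iff_ne_zero, Ne, ZMod.val_eq_zero]
      exact Units.ne_zero lam
    · rw [ZMod.natCast_zmod_val]
      simp
  obtain ⟨r, s, hr, hs, hcong, heq⟩ := Nat.sInf_mem hρne
  have hkey := key_nat hp hd3 hodd hdvd hlpow hlne hr hs hcong
  -- pass to reals
  have hφpos : 0 < d.totient := Nat.totient_pos.mpr (by omega)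
  have hφne : ((d.totient : ℝ)) ≠ 0 := Nat.cast_ne_zero.mpr hφpos.ne'
  have hx : (p : ℝ) ^ ((d.totient : ℝ))⁻¹ ≤ (r * s : ℝ) + 1 := by
    have h1 : (p : ℝ) ≤ ((r * s : ℝ) + 1) ^ (d.totient : ℕ) := by exact_mod_cast hkey
    calc (p : ℝ) ^ ((d.totient : ℝ))⁻¹
        ≤ (((r * s : ℝ) + 1) ^ (d.totient : ℕ)) ^ ((d.totient : ℝ))⁻¹ := by
          apply Real.rpow_le_rpow (by positivity) h1 (by positivity)
    _ = (r * s : ℝ) + 1 := by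
          rw [← Real.rpow_natCast ((r * s : ℝ) + 1) d.totient, ← Real.rpow_mul (by positivity),
            mul_inv_cancel₀ hφne, Real.rpow_one]
  have hrs1 : (1 : ℝ) ≤ (r : ℝ) * s := by
    have : 1 ≤ r * s := Nat.one_le_iff_ne_zero.mpr (Nat.mul_ne_zero hr.ne' hs.ne')
    exact_mod_cast this
  have hrho : rho p lam = r * s := heq
  have : (theta p d : ℝ) = (r : ℝ) * s := by
    rw [hleq, hrho]; push_cast; ring
  rw [this]
  push_cast at hx
  linarith
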